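/- For any 0 ≤ Q ≤ 1, the function f(x) = 1 + φ(√(Q + (1-Q)x)) - φ(√x) is convex in x on [0,1]. -/

import Mathlib

noncomputable def phi (x : ℝ) : ℝ :=
  1 - (1/2) * (1 + x) * Real.logb 2 (1 + x) - (1/2) * (1 - x) * Real.logb 2 (1 - x)

noncomputable def Pf (x : ℝ) : ℝ := Real.log (1 + Real.sqrt x) - Real.log (1 - Real.sqrt x)
noncomputable def g1 (x : ℝ) : ℝ := -Pf x / (4 * Real.sqrt x * Real.log 2)
noncomputable def g2 (x : ℝ) : ℝ :=
  -(1/(4*Real.log 2)) * (1/((1-x)*x) - Pf x/(2*x*Real.sqrt x))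
noncomputable def Phif (x : ℝ) : ℝ := (1-x)^2 * (1/((1-x)*x) - Pf x/(2*x*Real.sqrt x))

lemma sqrt_facts {x : ℝ} (hx : x ∈ Set.Ioo (0:ℝ) 1) :
    0 < Real.sqrt x ∧ Real.sqrt x < 1 ∧ Real.sqrt x * Real.sqrt x = x := by
  refine ⟨Real.sqrt_pos.2 hx.1, ?_, Real.mul_self_sqrt hx.1.le⟩
  calc Real.sqrt x < Real.sqrt 1 := Real.sqrt_lt_sqrt hx.1.le hx.2
    _ = 1 := Real.sqrt_one

lemma hasDerivAt_sqrt' {x : ℝ} (hx : 0 < x) :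
    HasDerivAt Real.sqrt (1 / (2 * Real.sqrt x)) x :=
  Real.hasDerivAt_sqrt hx.ne'

lemma hasDerivAt_Pf {x : ℝ} (hx : x ∈ Set.Ioo (0:ℝ) 1) :
    HasDerivAt Pf (1/((1-x) * Real.sqrt x)) x := by
  obtain ⟨hs0, hs1, hss⟩ := sqrt_facts hx
  set s := Real.sqrt x with hs
  have h1 : HasDerivAt (fun t => 1 + Real.sqrt t) (1/(2*s)) x :=
    (hasDerivAt_sqrt' hx.1).const_add 1
  have h2 : HasDerivAt (fun t => 1 - Real.sqrt t) (-(1/(2*s))) x :=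
    (hasDerivAt_sqrt' hx.1).const_sub 1
  have hl1 : HasDerivAt (fun t => Real.log (1 + Real.sqrt t)) ((1+s)⁻¹ * (1/(2*s))) x := by
    simpa [Function.comp_def] using (Real.hasDerivAt_log (by positivity : (0:ℝ) < 1 + s).ne').comp x h1
  have hl2 : HasDerivAt (fun t => Real.log (1 - Real.sqrt t)) ((1-s)⁻¹ * (-(1/(2*s)))) x := by
    simpa [Function.comp_def] using (Real.hasDerivAt_log (by linarith : (1:ℝ) - s > 0).ne').comp x h2
  have := hl1.sub hl2
  refine this.congr_deriv (Eq.symm ?_)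
  rw [← hss]
  have h1s : (1:ℝ) + s ≠ 0 := by positivity
  have h1s' : (1:ℝ) - s ≠ 0 := by linarith
  have h3 : (0:ℝ) < s - s^3 := by nlinarith
  have h5 : (s - s^3)⁻¹ * (s - s^3) = 1 := inv_mul_cancel₀ h3.ne'
  have h6 : (1:ℝ) - s^2 ≠ 0 := by nlinarith
  field_simp
  ring

lemma log2_pos : (0:ℝ) < Real.log 2 := Real.log_pos (by norm_num)

lemma phi_sqrt_eq (x : ℝ) : phi (Real.sqrt x) =
    1 - ((1 + Real.sqrt x) * Real.log (1 + Real.sqrt x)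
       + (1 - Real.sqrt x) * Real.log (1 - Real.sqrt x)) / (2 * Real.log 2) := by
  unfold phi Real.logb
  ring

lemma hasDerivAt_g {x : ℝ} (hx : x ∈ Set.Ioo (0:ℝ) 1) :
    HasDerivAt (fun t => phi (Real.sqrt t)) (g1 x) x := by
  obtain ⟨hs0, hs1, hss⟩ := sqrt_facts hx
  set s := Real.sqrt x with hs
  have h1s : (0:ℝ) < 1 + s := by linarith
  have h1s' : (0:ℝ) < 1 - s := by linarith
  have h1 : HasDerivAt (fun t => 1 + Real.sqrt t) (1/(2*s)) x :=
    (hasDerivAt_sqrt' hx.1).const_add 1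
  have h2 : HasDerivAt (fun t => 1 - Real.sqrt t) (-(1/(2*s))) x :=
    (hasDerivAt_sqrt' hx.1).const_sub 1
  have hl1 : HasDerivAt (fun t => Real.log (1 + Real.sqrt t)) ((1+s)⁻¹ * (1/(2*s))) x := by
    simpa [Function.comp_def] using (Real.hasDerivAt_log h1s.ne').comp x h1
  have hl2 : HasDerivAt (fun t => Real.log (1 - Real.sqrt t)) ((1-s)⁻¹ * (-(1/(2*s)))) x := by
    simpa [Function.comp_def] using (Real.hasDerivAt_log h1s'.ne').comp x h2
  have hA : HasDerivAt (fun t => (1 + Real.sqrt t) * Real.log (1 + Real.sqrt t))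
      ((1/(2*s)) * Real.log (1+s) + (1+s) * ((1+s)⁻¹ * (1/(2*s)))) x := h1.mul hl1
  have hB : HasDerivAt (fun t => (1 - Real.sqrt t) * Real.log (1 - Real.sqrt t))
      ((-(1/(2*s))) * Real.log (1-s) + (1-s) * ((1-s)⁻¹ * (-(1/(2*s))))) x := h2.mul hl2
  have hsum := ((hA.add hB).div_const (2 * Real.log 2)).const_sub 1
  have heq : (fun t => phi (Real.sqrt t)) = (fun t =>
      1 - ((1 + Real.sqrt t) * Real.log (1 + Real.sqrt t)
       + (1 - Real.sqrt t) * Real.log (1 - Real.sqrt t)) / (2 * Real.log 2)) := by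
    funext t; exact phi_sqrt_eq t
  rw [heq]
  refine hsum.congr_deriv (Eq.symm ?_)
  unfold g1 Pf
  rw [← hs]
  field_simp
  ring

lemma hasDerivAt_g1 {x : ℝ} (hx : x ∈ Set.Ioo (0:ℝ) 1) :
    HasDerivAt g1 (g2 x) x := by
  obtain ⟨hs0, hs1, hss⟩ := sqrt_facts hx
  set s := Real.sqrt x with hs
  have hden : HasDerivAt (fun t => 4 * Real.sqrt t * Real.log 2)
      (4 * (1/(2*s)) * Real.log 2) x := by
    simpa [mul_comm, mul_assoc] using
      (((hasDerivAt_sqrt' hx.1).const_mul 4).mul_const (Real.log 2))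
  have hnum : HasDerivAt (fun t => -Pf t) (-(1/((1-x)*s))) x := (hasDerivAt_Pf hx).neg
  have hdiv := hnum.div hden (by positivity : 4 * s * Real.log 2 ≠ 0)
  have : g1 = fun t => -Pf t / (4 * Real.sqrt t * Real.log 2) := rfl
  rw [this]
  refine hdiv.congr_deriv (Eq.symm ?_)
  unfold g2
  rw [← hs, ← hss]
  have h1x : (0:ℝ) < 1 - s * s := by nlinarith
  have hL := log2_pos
  field_simp
  ring

noncomputable def Wf (u : ℝ) : ℝ :=
  2*u*(3-u^2)/((3+u^2)*(1-u^2)) - (Real.log (1+u) - Real.log (1-u))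

lemma hasDerivAt_Wf {u : ℝ} (hu : u ∈ Set.Ioo (0:ℝ) 1) :
    HasDerivAt Wf (32*u^4/((3+u^2)^2*(1-u^2)^2)) u := by
  have hu0 := hu.1; have hu1 := hu.2
  have h1 : (0:ℝ) < 1 - u^2 := by nlinarith
  have h2 : (0:ℝ) < 3 + u^2 := by positivity
  have hN : HasDerivAt (fun t : ℝ => 2*t*(3-t^2)) (6 - 6*u^2) u := by
    have hb2 : HasDerivAt (fun t : ℝ => 3 - t^2) (-(2*u)) u := by
      simpa using (hasDerivAt_pow 2 u).const_sub 3
    have h5 : HasDerivAt (fun t : ℝ => 2*t*(3-t^2)) (2*1*(3-u^2) + 2*u*(-(2*u))) u := by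
      simpa [Pi.mul_def] using ((hasDerivAt_id u).const_mul 2).mul hb2
    convert h5 using 1; ring
  have hD : HasDerivAt (fun t : ℝ => (3+t^2)*(1-t^2)) ((2*u)*(1-u^2) + (3+u^2)*(-(2*u))) u := by
    have ha : HasDerivAt (fun t : ℝ => 3+t^2) (2*u) u := by
      simpa using (hasDerivAt_pow 2 u).const_add 3
    have hb : HasDerivAt (fun t : ℝ => 1-t^2) (-(2*u)) u := by
      simpa using (hasDerivAt_pow 2 u).const_sub 1
    exact ha.mul hb
  have hrat := hN.div hD (by positivity : (3+u^2)*(1-u^2) ≠ 0)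
  have hla : HasDerivAt (fun t : ℝ => Real.log (1+t)) ((1+u)⁻¹) u := by
    simpa [Function.comp_def] using (Real.hasDerivAt_log (by linarith : (1:ℝ)+u ≠ 0)).comp u
      ((hasDerivAt_id u).const_add 1)
  have hlb : HasDerivAt (fun t : ℝ => Real.log (1-t)) (-(1-u)⁻¹) u := by
    have h3 : (0:ℝ) < 1 - u := by linarith
    simpa [Function.comp_def] using (Real.hasDerivAt_log h3.ne').comp u ((hasDerivAt_id u).const_sub 1)
  have := hrat.sub (hla.sub hlb)
  refine this.congr_deriv (Eq.symm ?_)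
  have h3 : (0:ℝ) < 1 - u := by linarith
  have h4 : (0:ℝ) < 1 + u := by linarith
  field_simp
  ring

lemma key_ineq {u : ℝ} (hu0 : 0 ≤ u) (hu1 : u < 1) :
    Real.log (1+u) - Real.log (1-u) ≤ 2*u*(3-u^2)/((3+u^2)*(1-u^2)) := by
  have hmono : MonotoneOn Wf (Set.Ico (0:ℝ) 1) := by
    have hcont : ContinuousOn Wf (Set.Ico (0:ℝ) 1) := by
      intro v hv
      have h1 : (0:ℝ) < 1 - v^2 := by nlinarith [hv.1, hv.2]
      apply ContinuousWithinAt.sub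
      · apply ContinuousWithinAt.div
        · exact (Continuous.continuousWithinAt (by continuity))
        · exact (Continuous.continuousWithinAt (by continuity))
        · positivity
      · apply ContinuousWithinAt.sub
        · apply Real.continuousAt_log (by nlinarith [hv.1] : (1:ℝ)+v ≠ 0)
            |>.comp (by fun_prop) |>.continuousWithinAt
        · apply Real.continuousAt_log (by nlinarith [hv.2] : (1:ℝ)-v ≠ 0)
            |>.comp (by fun_prop) |>.continuousWithinAt
    apply monotoneOn_of_deriv_nonneg (convex_Ico 0 1) hcont
    · intro v hv
      rw [interior_Ico] at hv
      exact (hasDerivAt_Wf hv).differentiableAt.differentiableWithinAt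
    · intro v hv
      rw [interior_Ico] at hv
      rw [(hasDerivAt_Wf hv).deriv]
      have h1 : (0:ℝ) < 1 - v^2 := by nlinarith [hv.1, hv.2]
      positivity
  have h0 : Wf 0 = 0 := by simp [Wf]
  have := hmono (Set.mem_Ico.2 ⟨le_refl 0, one_pos⟩) (Set.mem_Ico.2 ⟨hu0, hu1⟩) hu0
  rw [h0] at this
  unfold Wf at this
  linarith

lemma hasDerivAt_Phif {x : ℝ} (hx : x ∈ Set.Ioo (0:ℝ) 1) :
    HasDerivAt Phif
      (-1/x^2 - (1-x)/(2*x^2) + (1-x)*(3+x)*Pf x/(4*x^2*Real.sqrt x)) x := by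
  obtain ⟨hs0, hs1, hss⟩ := sqrt_facts hx
  set s := Real.sqrt x with hs
  have hx0 := hx.1
  have hx1 : (0:ℝ) < 1 - x := by linarith [hx.2]
  have hq : HasDerivAt (fun t : ℝ => (1-t)^2) (2*(1-x)^1*(-1)) x :=
    ((hasDerivAt_id x).const_sub 1).pow 2
  have hbase : HasDerivAt (fun t : ℝ => (1-t)*t) ((-1)*x + (1-x)*1) x :=
    ((hasDerivAt_id x).const_sub 1).mul (hasDerivAt_id x)
  have hinv : HasDerivAt (fun t : ℝ => 1/((1-t)*t))
      (-((-1)*x + (1-x)*1)/((1-x)*x)^2) x := by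
    simpa [one_div, Pi.inv_def] using hbase.inv (by positivity : (1-x)*x ≠ 0)
  have hden : HasDerivAt (fun t : ℝ => 2*t*Real.sqrt t)
      (2*1*s + 2*x*(1/(2*s))) x := by
    simpa [Pi.mul_def] using ((hasDerivAt_id x).const_mul 2).mul (hasDerivAt_sqrt' hx.1)
  have hfrac : HasDerivAt (fun t : ℝ => Pf t/(2*t*Real.sqrt t))
      (((1/((1-x)*s))*(2*x*s) - Pf x*(2*1*s + 2*x*(1/(2*s))))/(2*x*s)^2) x :=
    (hasDerivAt_Pf hx).div hden (by positivity : 2*x*s ≠ 0)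
  have hmain := hq.mul (hinv.sub hfrac)
  have : Phif = fun t : ℝ => (1-t)^2 * (1/((1-t)*t) - Pf t/(2*t*Real.sqrt t)) := rfl
  rw [this]
  refine hmain.congr_deriv (Eq.symm ?_)
  simp only [Pi.sub_apply]
  rw [← hs, ← hss]
  have h1x : (0:ℝ) < 1 - s*s := by nlinarith
  have h6 : (1:ℝ) - s^2 ≠ 0 := by nlinarith
  field_simp
  ring

lemma key_ineq' {x : ℝ} (hx : x ∈ Set.Ioo (0:ℝ) 1) :
    Pf x * ((3 + Real.sqrt x^2) * (1 - Real.sqrt x^2))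
      ≤ 2*Real.sqrt x*(3 - Real.sqrt x^2) := by
  obtain ⟨hs0, hs1, hss⟩ := sqrt_facts hx
  set s := Real.sqrt x with hs
  have h1 : (0:ℝ) < 1 - s^2 := by nlinarith
  have h2 : (0:ℝ) < 3 + s^2 := by positivity
  have := key_ineq hs0.le hs1
  unfold Pf
  rw [← hs]
  calc (Real.log (1+s) - Real.log (1-s)) * ((3+s^2)*(1-s^2))
      ≤ (2*s*(3-s^2)/((3+s^2)*(1-s^2))) * ((3+s^2)*(1-s^2)) := by
        apply mul_le_mul_of_nonneg_right this (by positivity)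
    _ = 2*s*(3-s^2) := by field_simp
  
lemma deriv_Phif_nonpos {x : ℝ} (hx : x ∈ Set.Ioo (0:ℝ) 1) :
    -1/x^2 - (1-x)/(2*x^2) + (1-x)*(3+x)*Pf x/(4*x^2*Real.sqrt x) ≤ 0 := by
  obtain ⟨hs0, hs1, hss⟩ := sqrt_facts hx
  set s := Real.sqrt x with hs
  have hkey := key_ineq' hx
  rw [← hs] at hkey
  have heq : -1/x^2 - (1-x)/(2*x^2) + (1-x)*(3+x)*Pf x/(4*x^2*s)
      = (Pf x*((3+s^2)*(1-s^2)) - 2*s*(3-s^2))/(4*x^2*s) := by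
    rw [← hss]
    have h1x : (0:ℝ) < 1 - s*s := by nlinarith
    field_simp
    ring
  rw [heq]
  apply div_nonpos_of_nonpos_of_nonneg (by linarith) (by positivity)

lemma antitoneOn_Phif : AntitoneOn Phif (Set.Ioo (0:ℝ) 1) := by
  apply antitoneOn_of_deriv_nonpos (convex_Ioo 0 1)
  · intro v hv
    exact (hasDerivAt_Phif hv).continuousAt.continuousWithinAt
  · intro v hv
    rw [interior_Ioo] at hv
    exact (hasDerivAt_Phif hv).differentiableAt.differentiableWithinAt
  · intro v hv
    rw [interior_Ioo] at hv
    rw [(hasDerivAt_Phif hv).deriv]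
    exact deriv_Phif_nonpos hv

lemma Phif_nonneg {x : ℝ} (hx : x ∈ Set.Ioo (0:ℝ) 1) : 0 ≤ Phif x := by
  obtain ⟨hs0, hs1, hss⟩ := sqrt_facts hx
  set s := Real.sqrt x with hs
  have hs2 : s^2 = x := by rw [sq]; exact hss
  have hkey := key_ineq' hx
  rw [← hs, hs2] at hkey
  have hx1 : (0:ℝ) < 1 - x := by linarith [hx.2]
  have h3x : (0:ℝ) < 3 + x := by linarith [hx.1]
  unfold Phif
  rw [← hs]
  apply mul_nonneg (sq_nonneg _)
  rw [sub_nonneg]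
  rw [div_le_div_iff₀ (by nlinarith [hs0, hx.1] : (0:ℝ) < 2*x*s) (by nlinarith [hx.1, hx1] : (0:ℝ) < (1-x)*x)]
  nlinarith [mul_le_mul_of_nonneg_left hkey hx.1.le, hs0, hx.1,
    mul_pos hx.1 hs0, mul_pos (mul_pos hx.1 hx.1) hs0]

lemma cont_phisqrt : Continuous fun x : ℝ => phi (Real.sqrt x) := by
  have heq : (fun x : ℝ => phi (Real.sqrt x)) = fun x : ℝ =>
      1 - ((1 + Real.sqrt x) * Real.log (1 + Real.sqrt x)
       + (1 - Real.sqrt x) * Real.log (1 - Real.sqrt x)) / (2 * Real.log 2) := by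
    funext t; exact phi_sqrt_eq t
  rw [heq]
  have h1 : Continuous fun x : ℝ => (1 + Real.sqrt x) * Real.log (1 + Real.sqrt x) :=
    Real.continuous_mul_log.comp (by continuity)
  have h2 : Continuous fun x : ℝ => (1 - Real.sqrt x) * Real.log (1 - Real.sqrt x) :=
    Real.continuous_mul_log.comp (by continuity)
  continuity

lemma g2_eq {x : ℝ} (hx : x ∈ Set.Ioo (0:ℝ) 1) :
    g2 x = -(1/(4*Real.log 2)) * (Phif x / (1-x)^2) := by
  have hx1 : (1:ℝ) - x ≠ 0 := by
    have := hx.2; intro h; nlinarith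
  unfold g2 Phif
  rw [mul_comm ((1-x)^2), mul_div_assoc,
    div_self (by positivity : ((1:ℝ)-x)^2 ≠ 0), mul_one]

lemma second_deriv_nonneg {Q x : ℝ} (hQ0 : 0 ≤ Q) (hQ1 : Q < 1)
    (hx : x ∈ Set.Ioo (0:ℝ) 1) :
    0 ≤ (1-Q)^2 * g2 (Q + (1-Q)*x) - g2 x := by
  set l := Q + (1-Q)*x with hl
  have hx0 := hx.1
  have hx1 := hx.2
  have hlmem : l ∈ Set.Ioo (0:ℝ) 1 := by
    constructor
    · nlinarith
    · nlinarith
  have hxl : x ≤ l := by nlinarith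
  have hPhi : Phif l ≤ Phif x := antitoneOn_Phif hx hlmem hxl
  have h1l : 1 - l = (1-Q)*(1-x) := by rw [hl]; ring
  rw [g2_eq hlmem, g2_eq hx, h1l]
  have hx1' : (0:ℝ) < 1 - x := by linarith
  have hQ1' : (0:ℝ) < 1 - Q := by linarith
  have hL := log2_pos
  have heq : (1-Q)^2 * (-(1/(4*Real.log 2)) * (Phif l / ((1-Q)*(1-x))^2))
      - (-(1/(4*Real.log 2)) * (Phif x / (1-x)^2))
      = (Phif x - Phif l) / (4*Real.log 2*(1-x)^2) := by
    field_simp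
    ring
  rw [heq]
  apply div_nonneg (by linarith) (by positivity)

lemma convex_main {Q : ℝ} (hQ0 : 0 ≤ Q) (hQ1 : Q < 1) :
    ConvexOn ℝ (Set.Icc 0 1)
      (fun x : ℝ => 1 + phi (Real.sqrt (Q + (1 - Q) * x)) - phi (Real.sqrt x)) := by
  set F := fun x : ℝ => 1 + phi (Real.sqrt (Q + (1 - Q) * x)) - phi (Real.sqrt x) with hF
  set f1 := fun x : ℝ => g1 (Q + (1-Q)*x) * (1-Q) - g1 x with hf1
  set f2 := fun x : ℝ => (1-Q)^2 * g2 (Q + (1-Q)*x) - g2 x with hf2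
  have hmem : ∀ x ∈ Set.Ioo (0:ℝ) 1, Q + (1-Q)*x ∈ Set.Ioo (0:ℝ) 1 := by
    intro x hx
    constructor
    · nlinarith [hx.1]
    · nlinarith [hx.2]
  have haff : ∀ x : ℝ, HasDerivAt (fun t : ℝ => Q + (1-Q)*t) (1-Q) x := by
    intro x
    simpa using ((hasDerivAt_id x).const_mul (1-Q)).const_add Q
  have hF' : ∀ x ∈ Set.Ioo (0:ℝ) 1, HasDerivAt F (f1 x) x := by
    intro x hx
    have hcomp : HasDerivAt (fun t : ℝ => phi (Real.sqrt (Q + (1-Q)*t)))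
        (g1 (Q + (1-Q)*x) * (1-Q)) x :=
      (hasDerivAt_g (hmem x hx)).comp (h₂ := fun t => phi (Real.sqrt t)) x (haff x)
    exact (hcomp.const_add 1).sub (hasDerivAt_g hx)
  have hf1' : ∀ x ∈ Set.Ioo (0:ℝ) 1, HasDerivAt f1 (f2 x) x := by
    intro x hx
    have hcomp : HasDerivAt (fun t : ℝ => g1 (Q + (1-Q)*t))
        (g2 (Q + (1-Q)*x) * (1-Q)) x :=
      (hasDerivAt_g1 (hmem x hx)).comp (h₂ := g1) x (haff x)
    have := (hcomp.mul_const (1-Q)).sub (hasDerivAt_g1 hx)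
    refine this.congr_deriv (Eq.symm ?_)
    rw [hf2]; ring
  apply convexOn_of_deriv2_nonneg (convex_Icc 0 1)
  · apply Continuous.continuousOn
    exact (continuous_const.add (cont_phisqrt.comp (by continuity))).sub cont_phisqrt
  · rw [interior_Icc]
    intro x hx
    exact ((hF' x hx).differentiableAt).differentiableWithinAt
  · rw [interior_Icc]
    intro x hx
    have hev : deriv F =ᶠ[nhds x] f1 :=
      Filter.eventuallyEq_of_mem (isOpen_Ioo.mem_nhds hx) (fun y hy => (hF' y hy).deriv)
    exact ((Filter.EventuallyEq.differentiableAt_iff hev).2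
      (hf1' x hx).differentiableAt).differentiableWithinAt
  · rw [interior_Icc]
    intro x hx
    have hev : deriv F =ᶠ[nhds x] f1 :=
      Filter.eventuallyEq_of_mem (isOpen_Ioo.mem_nhds hx) (fun y hy => (hF' y hy).deriv)
    have h2 : deriv^[2] F x = f2 x := by
      show deriv (deriv F) x = f2 x
      rw [hev.deriv_eq, (hf1' x hx).deriv]
    rw [h2, hf2]
    exact second_deriv_nonneg hQ0 hQ1 hx

theorem stmt_2 (Q : ℝ) (hQ0 : 0 ≤ Q) (hQ1 : Q ≤ 1) :
    ConvexOn ℝ (Set.Icc 0 1)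
      (fun x : ℝ => 1 + phi (Real.sqrt (Q + (1 - Q) * x)) - phi (Real.sqrt x)) := by
  rcases lt_or_eq_of_le hQ1 with hQ | hQ
  · exact convex_main hQ0 hQ
  · -- Q = 1
    subst hQ
    have hsimp : (fun x : ℝ => 1 + phi (Real.sqrt (1 + (1 - 1) * x)) - phi (Real.sqrt x))
        = fun x : ℝ => 1 - phi (Real.sqrt x) := by
      funext x
      have : (1:ℝ) + (1-1)*x = 1 := by ring
      rw [this, Real.sqrt_one]
      have hphi1 : phi 1 = 0 := by
        unfold phi
        rw [show (1:ℝ)+1 = 2 by norm_num, Real.logb_self_eq_one (by norm_num : (1:ℝ) < 2)]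
        norm_num
      rw [hphi1]; ring
    rw [hsimp]
    set F := fun x : ℝ => 1 - phi (Real.sqrt x) with hF
    have hF' : ∀ x ∈ Set.Ioo (0:ℝ) 1, HasDerivAt F (-g1 x) x := by
      intro x hx
      have := ((hasDerivAt_g hx).neg).const_add 1
      simpa [hF, sub_eq_add_neg] using this
    apply convexOn_of_deriv2_nonneg (convex_Icc 0 1)
    · exact (continuous_const.sub cont_phisqrt).continuousOn
    · rw [interior_Icc]
      intro x hx
      exact ((hF' x hx).differentiableAt).differentiableWithinAt
    · rw [interior_Icc]
      intro x hx
      have hev : deriv F =ᶠ[nhds x] (fun t => -g1 t) :=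
        Filter.eventuallyEq_of_mem (isOpen_Ioo.mem_nhds hx) (fun y hy => (hF' y hy).deriv)
      exact ((Filter.EventuallyEq.differentiableAt_iff hev).2
        ((hasDerivAt_g1 hx).neg).differentiableAt).differentiableWithinAt
    · rw [interior_Icc]
      intro x hx
      have hev : deriv F =ᶠ[nhds x] (fun t => -g1 t) :=
        Filter.eventuallyEq_of_mem (isOpen_Ioo.mem_nhds hx) (fun y hy => (hF' y hy).deriv)
      have h2 : deriv^[2] F x = -g2 x := by
        show deriv (deriv F) x = -g2 x
        rw [hev.deriv_eq, HasDerivAt.deriv (f := fun t => -g1 t) ((hasDerivAt_g1 hx).neg)]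
      rw [h2, g2_eq hx]
      have hL := log2_pos
      have hP := Phif_nonneg hx
      rw [neg_mul, neg_neg]
      exact mul_nonneg (by positivity) (div_nonneg hP (sq_nonneg _))
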